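/- For every D > 0, sInf {H(φ) | φ : ℝ → ℂ admissible and M(φ) ≤ D} = D³ · sInf {H(φ) | φ : ℝ → ℂ admissible and M(φ) ≤ 1}, where sInf denotes the infimum of a set of real numbers (Real.sInf with its usual conventions). In other words, the constrained variational problem satisfies I(D) = D³·I(1). -/

import Mathlib

open MeasureTheory Pointwise

/-- The mass `M(f) = ∫_ℝ |f(x)|² dx`. -/
noncomputable def M (f : ℝ → ℂ) : ℝ := ∫ x : ℝ, ‖f x‖ ^ 2

/-- The focusing Hamiltonian `H(f) = (1/2)∫_ℝ |f'(x)|² dx − (1/4)∫_ℝ |f(x)|⁴ dx`. -/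
noncomputable def H (f : ℝ → ℂ) : ℝ :=
  (1 / 2) * (∫ x : ℝ, ‖deriv f x‖ ^ 2) - (1 / 4) * (∫ x : ℝ, ‖f x‖ ^ 4)

/-- `f` is admissible if it is differentiable and `|f|²`, `|f|⁴`, `|f'|²` are integrable. -/
def Admissible (f : ℝ → ℂ) : Prop :=
  Differentiable ℝ f ∧ Integrable (fun x : ℝ => ‖f x‖ ^ 2) ∧
    Integrable (fun x : ℝ => ‖f x‖ ^ 4) ∧ Integrable (fun x : ℝ => ‖deriv f x‖ ^ 2)

lemma scale_hasDerivAt (c : ℝ) (φ : ℝ → ℂ) (hφ : Differentiable ℝ φ) (x : ℝ) :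
    HasDerivAt (fun x => (c : ℂ) * φ (c * x)) ((c ^ 2 : ℝ) • deriv φ (c * x)) x := by
  have h1 : HasDerivAt (fun x : ℝ => c * x) c x := by
    simpa using (hasDerivAt_id x).const_mul c
  have h2 : HasDerivAt φ (deriv φ (c * x)) (c * x) := (hφ (c * x)).hasDerivAt
  have h3 : HasDerivAt (fun x => φ (c * x)) (c • deriv φ (c * x)) x := h2.scomp x h1
  have h4 := h3.const_mul (c : ℂ)
  convert h4 using 1
  · rfl
  push_cast [Complex.real_smul]
  ring

lemma deriv_scale (c : ℝ) (φ : ℝ → ℂ) (hφ : Differentiable ℝ φ) :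
    deriv (fun x => (c : ℂ) * φ (c * x)) = fun x => (c ^ 2 : ℝ) • deriv φ (c * x) := by
  funext x
  exact (scale_hasDerivAt c φ hφ x).deriv

lemma scale_all (c : ℝ) (hc : 0 < c) (φ : ℝ → ℂ) (h : Admissible φ) :
    Admissible (fun x => (c : ℂ) * φ (c * x)) ∧
      M (fun x => (c : ℂ) * φ (c * x)) = c * M φ ∧
      H (fun x => (c : ℂ) * φ (c * x)) = c ^ 3 * H φ := by
  obtain ⟨hdiff, hM2, hM4, hD2⟩ := h
  have hc0 : c ≠ 0 := hc.ne'
  have hder := deriv_scale c φ hdiff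
  have hn2 : ∀ x : ℝ, ‖(c : ℂ) * φ (c * x)‖ ^ 2 = c ^ 2 * ‖φ (c * x)‖ ^ 2 := by
    intro x
    rw [norm_mul, Complex.norm_real, Real.norm_eq_abs, abs_of_pos hc]
    ring
  have hn4 : ∀ x : ℝ, ‖(c : ℂ) * φ (c * x)‖ ^ 4 = c ^ 4 * ‖φ (c * x)‖ ^ 4 := by
    intro x
    rw [norm_mul, Complex.norm_real, Real.norm_eq_abs, abs_of_pos hc]
    ring
  have hnd : ∀ x : ℝ, ‖deriv (fun x => (c : ℂ) * φ (c * x)) x‖ ^ 2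
      = c ^ 4 * ‖deriv φ (c * x)‖ ^ 2 := by
    intro x
    rw [hder]
    simp only [norm_smul, Real.norm_eq_abs, abs_of_pos (pow_pos hc 2)]
    ring
  have hint : ∀ (g : ℝ → ℝ) (k : ℝ), Integrable g →
      Integrable (fun x : ℝ => k * g (c * x)) := fun g k hg =>
    (hg.comp_mul_left' hc0).const_mul k
  have hI : ∀ (g : ℝ → ℝ) (k : ℝ), (∫ x : ℝ, k * g (c * x)) = (k / c) * ∫ x : ℝ, g x := by
    intro g k
    rw [integral_const_mul, MeasureTheory.Measure.integral_comp_mul_left g c,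
      abs_of_pos (inv_pos.2 hc), smul_eq_mul]
    ring
  have habs2 : (∫ x : ℝ, ‖(c : ℂ) * φ (c * x)‖ ^ 2) = c * ∫ x : ℝ, ‖φ x‖ ^ 2 := by
    simp_rw [hn2]
    rw [hI (fun x => ‖φ x‖ ^ 2) (c ^ 2)]
    field_simp
  have habs4 : (∫ x : ℝ, ‖(c : ℂ) * φ (c * x)‖ ^ 4) = c ^ 3 * ∫ x : ℝ, ‖φ x‖ ^ 4 := by
    simp_rw [hn4]
    rw [hI (fun x => ‖φ x‖ ^ 4) (c ^ 4)]
    field_simp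
  have habsd : (∫ x : ℝ, ‖deriv (fun x => (c : ℂ) * φ (c * x)) x‖ ^ 2)
      = c ^ 3 * ∫ x : ℝ, ‖deriv φ x‖ ^ 2 := by
    simp_rw [hnd]
    rw [hI (fun x => ‖deriv φ x‖ ^ 2) (c ^ 4)]
    field_simp
  refine ⟨⟨?_, ?_, ?_, ?_⟩, ?_, ?_⟩
  · exact fun x => ((scale_hasDerivAt c φ hdiff x).differentiableAt)
  · simp_rw [hn2]; exact hint _ _ hM2
  · simp_rw [hn4]; exact hint _ _ hM4
  · simp_rw [hnd]; exact hint _ _ hD2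
  · unfold M; rw [habs2]
  · unfold H; rw [habs4, habsd]; ring

/-- The constrained variational problem `I(D) = inf {H(φ) : M(φ) ≤ D}` satisfies
`I(D) = D³ · I(1)`. -/
theorem inf_scaling (D : ℝ) (hD : 0 < D) :
    sInf {y : ℝ | ∃ φ : ℝ → ℂ, Admissible φ ∧ M φ ≤ D ∧ H φ = y} =
      D ^ 3 * sInf {y : ℝ | ∃ φ : ℝ → ℂ, Admissible φ ∧ M φ ≤ 1 ∧ H φ = y} := by
  have hD0 : D ≠ 0 := hD.ne'
  have hset : {y : ℝ | ∃ φ : ℝ → ℂ, Admissible φ ∧ M φ ≤ D ∧ H φ = y}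
      = (D ^ 3) • {y : ℝ | ∃ φ : ℝ → ℂ, Admissible φ ∧ M φ ≤ 1 ∧ H φ = y} := by
    ext y
    constructor
    · rintro ⟨φ, hA, hM, rfl⟩
      obtain ⟨hA', hM', hH'⟩ := scale_all D⁻¹ (inv_pos.2 hD) φ hA
      refine Set.mem_smul_set.2 ⟨H (fun x => ((D⁻¹ : ℝ) : ℂ) * φ (D⁻¹ * x)), ⟨_, hA', ?_, rfl⟩, ?_⟩
      · rw [hM']
        calc D⁻¹ * M φ ≤ D⁻¹ * D := by
              exact mul_le_mul_of_nonneg_left hM (inv_nonneg.2 hD.le)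
          _ = 1 := inv_mul_cancel₀ hD0
      · push_cast at hH' ⊢
        rw [smul_eq_mul, hH']
        field_simp
    · rintro ⟨y, ⟨φ, hA, hM, rfl⟩, rfl⟩
      obtain ⟨hA', hM', hH'⟩ := scale_all D hD φ hA
      refine ⟨_, hA', ?_, ?_⟩
      · rw [hM']; calc D * M φ ≤ D * 1 := mul_le_mul_of_nonneg_left hM hD.le
          _ = D := mul_one D
      · rw [hH']; simp [smul_eq_mul]
  rw [hset, Real.sInf_smul_of_nonneg (by positivity), smul_eq_mul]
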